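/- Let V satisfy (H1)–(H3), let ε ∈ (0,1) be such that (H3) holds with the constants 1−ε and 1+ε, and set Δ := 1 + inf{V(r) : r ≥ α, r ∉ (1−ε, 1+ε)}; assume Δ > 0. If an N-point configuration S ⊂ ℝ² satisfies E(S) ≤ −6N + C N^{1/2}, then the number of points of S having fewer than six points of S at distance in [1−ε, 1+ε] is at most (C/Δ) N^{1/2}. -/
import Mathlib


open Set Metric
open scoped Classical

noncomputable section

abbrev E2 := EuclideanSpace ℝ (Fin 2)

/-- Hypotheses (H1)-(H3) on the pair potential. -/
def SatisfiesH (V : ℝ → EReal) (α β : ℝ) : Prop :=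
  α ∈ Set.Ioc (0 : ℝ) 1 ∧ 1 ≤ β ∧
  V 1 = -1 ∧ (∀ r : ℝ, 0 < r → r ≠ 1 → -1 < V r) ∧
  (∀ r : ℝ, 0 < r → r < α → V r = ⊤) ∧
  (∀ r : ℝ, β < r → V r = 0) ∧
  ContinuousOn V (Set.Ioo α β) ∧
  (∀ (c : E2) (T : Finset E2),
    (∀ x ∈ T, dist x c ≤ β) → (∀ x ∈ T, α ≤ dist x c) →
    (∀ x ∈ T, ∀ y ∈ T, x ≠ y → α ≤ dist x y) → T.card ≤ 6)

/-- Hypothesis (H3) for a pair of constants `a ≤ b`. -/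
def H3cond (a b : ℝ) : Prop :=
  ∀ (c : E2) (T : Finset E2),
    (∀ x ∈ T, dist x c ≤ b) → (∀ x ∈ T, a ≤ dist x c) →
    (∀ x ∈ T, ∀ y ∈ T, x ≠ y → a ≤ dist x y) → T.card ≤ 6

/-- The pair-interaction energy of an `N`-point configuration (ordered pairs). -/
def energy {N : ℕ} (V : ℝ → EReal) (x : Fin N → E2) : EReal :=
  ∑ i : Fin N, ∑ j : Fin N, if i ≠ j then V (dist (x i) (x j)) else 0

private lemma ereal_coe_sum {ι : Type*} (s : Finset ι) (f : ι → ℝ) :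
    ((∑ a ∈ s, f a : ℝ) : EReal) = ∑ a ∈ s, (f a : EReal) := by
  induction s using Finset.cons_induction with
  | empty => simp
  | cons a s ha ih => rw [Finset.sum_cons, Finset.sum_cons, EReal.coe_add, ih]

private lemma ereal_sum_ne_bot {ι : Type*} (s : Finset ι) (f : ι → EReal)
    (h : ∀ a ∈ s, f a ≠ ⊥) : ∑ a ∈ s, f a ≠ ⊥ := by
  induction s using Finset.cons_induction with
  | empty => simp
  | cons a s ha ih =>
    rw [Finset.sum_cons, Ne, EReal.add_eq_bot_iff]
    push_neg
    exact ⟨h a (Finset.mem_cons_self a s), ih fun b hb => h b (Finset.mem_cons_of_mem hb)⟩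

private lemma ereal_sum_eq_top {ι : Type*} (s : Finset ι) (f : ι → EReal)
    (h : ∀ a ∈ s, f a ≠ ⊥) {a : ι} (ha : a ∈ s) (hta : f a = ⊤) : ∑ b ∈ s, f b = ⊤ := by
  rw [← Finset.add_sum_erase s f ha, hta]
  exact EReal.top_add_of_ne_bot
    (ereal_sum_ne_bot _ _ fun b hb => h b (Finset.mem_of_mem_erase hb))

/-- in a low-energy configuration, the number of points with fewer than
six neighbours is at most `(C/Δ) N^{1/2}`. -/
theorem boundary_atom_count (V : ℝ → EReal) (α β : ℝ) (hV : SatisfiesH V α β)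
    (ε : ℝ) (hε : ε ∈ Set.Ioo (0 : ℝ) 1) (h3' : H3cond (1 - ε) (1 + ε))
    (Δ : ℝ) (hΔ : (Δ : EReal) = 1 + sInf (V '' {r : ℝ | α ≤ r ∧ r ∉ Set.Ioo (1 - ε) (1 + ε)}))
    (hΔpos : 0 < Δ) (C : ℝ) (N : ℕ) (x : Fin N → E2) (hinj : Function.Injective x)
    (hE : energy V x ≤ ((-6 * (N : ℝ) + C * Real.sqrt (N : ℝ) : ℝ) : EReal)) :
    ((Finset.univ.filter (fun i : Fin N =>
        (Finset.univ.filter (fun j : Fin N =>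
          j ≠ i ∧ dist (x i) (x j) ∈ Set.Icc (1 - ε) (1 + ε))).card < 6)).card : ℝ) ≤
      (C / Δ) * Real.sqrt (N : ℝ) := by
  obtain ⟨hα, hβ, hV1, hVgt, hVtop, hV0, _, h3⟩ := hV
  obtain ⟨hε0, hε1⟩ := hε
  have hm1e : ((-1 : ℝ) : EReal) = -1 := by
    rw [show (-1:ℝ) = -(1:ℝ) by norm_num, EReal.coe_neg, EReal.coe_one]
  have hdpos : ∀ i j : Fin N, i ≠ j → 0 < dist (x i) (x j) := fun i j hij =>
    dist_pos.mpr fun h => hij (hinj h)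
  have hVm1 : ∀ i j : Fin N, i ≠ j → ((-1 : ℝ) : EReal) ≤ V (dist (x i) (x j)) := by
    intro i j hij
    rw [hm1e]
    rcases eq_or_ne (dist (x i) (x j)) 1 with h1 | h1
    · rw [h1, hV1]
    · exact (hVgt _ (hdpos i j hij) h1).le
  have hterm_ne_bot : ∀ i j : Fin N,
      (if i ≠ j then V (dist (x i) (x j)) else 0) ≠ ⊥ := by
    intro i j
    split
    · next hij =>
      exact ((lt_of_lt_of_le (EReal.bot_lt_coe (-1)) (hVm1 i j hij))).ne'
    · simp
  have hEtop : energy V x ≠ ⊤ := (hE.trans_lt (EReal.coe_lt_top _)).ne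
  have hαle : ∀ i j : Fin N, i ≠ j → α ≤ dist (x i) (x j) := by
    intro i j hij
    by_contra hlt
    push_neg at hlt
    have hVt : V (dist (x i) (x j)) = ⊤ := hVtop _ (hdpos i j hij) hlt
    apply hEtop
    refine ereal_sum_eq_top _ _
      (fun a _ => ereal_sum_ne_bot _ _ fun b _ => hterm_ne_bot a b) (Finset.mem_univ i) ?_
    refine ereal_sum_eq_top _ _ (fun b _ => hterm_ne_bot i b) (Finset.mem_univ j) ?_
    rw [if_pos hij, hVt]
  set S : Set ℝ := {r : ℝ | α ≤ r ∧ r ∉ Set.Ioo (1 - ε) (1 + ε)} with hS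
  have hmem : V (β + 1) ∈ V '' S :=
    ⟨β + 1, ⟨by linarith [hα.2], fun hc => absurd hc.2 (by push_neg; linarith)⟩, rfl⟩
  have hsInf0 : ∀ s : EReal, (Δ : EReal) = 1 + s → s = ((Δ - 1 : ℝ) : EReal) := by
    intro s h
    induction s using EReal.rec with
    | bot =>
      rw [EReal.add_bot] at h
      exact absurd h (EReal.coe_ne_bot Δ)
    | coe r =>
      norm_cast at h ⊢
      linarith
    | top =>
      rw [EReal.add_top_of_ne_bot (by rw [← EReal.coe_one]; exact EReal.coe_ne_bot 1)] at h
      exact absurd h (EReal.coe_ne_top Δ)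
  have hsInf : sInf (V '' S) = ((Δ - 1 : ℝ) : EReal) := hsInf0 _ hΔ
  have hΔ1 : Δ ≤ 1 := by
    have h0 : sInf (V '' S) ≤ V (β + 1) := sInf_le hmem
    rw [hsInf, hV0 _ (by linarith), ← EReal.coe_zero, EReal.coe_le_coe_iff] at h0
    linarith
  have hVΔ : ∀ i j : Fin N, i ≠ j →
      dist (x i) (x j) ∉ Set.Icc (1 - ε) (1 + ε) →
      ((Δ - 1 : ℝ) : EReal) ≤ V (dist (x i) (x j)) := by
    intro i j hij hni
    rw [← hsInf]
    exact sInf_le ⟨_, ⟨hαle i j hij, fun hIoo => hni ⟨hIoo.1.le, hIoo.2.le⟩⟩, rfl⟩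
  set w : Fin N → Fin N → ℝ := fun i j =>
    if i ≠ j ∧ dist (x i) (x j) ≤ β then
      (if dist (x i) (x j) ∈ Set.Icc (1 - ε) (1 + ε) then -1 else Δ - 1)
    else 0 with hw
  have hpoint : ∀ i j : Fin N,
      ((w i j : ℝ) : EReal) ≤ (if i ≠ j then V (dist (x i) (x j)) else 0) := by
    intro i j
    by_cases hij : i ≠ j
    · rw [if_pos hij]
      by_cases hbd : dist (x i) (x j) ≤ β
      · by_cases hnb : dist (x i) (x j) ∈ Set.Icc (1 - ε) (1 + ε)
        · simp only [hw]
          rw [if_pos (And.intro hij hbd), if_pos hnb]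
          exact hVm1 i j hij
        · simp only [hw]
          rw [if_pos (And.intro hij hbd), if_neg hnb]
          exact hVΔ i j hij hnb
      · have hz : w i j = 0 := by
          simp only [hw]; rw [if_neg]; exact fun h => hbd h.2
        rw [hz, hV0 _ (lt_of_not_ge hbd), EReal.coe_zero]
    · simp only [hw]
      rw [if_neg hij, if_neg (fun h => hij h.1), EReal.coe_zero]
  set Bad : Finset (Fin N) := Finset.univ.filter (fun i : Fin N =>
      (Finset.univ.filter (fun j : Fin N =>
        j ≠ i ∧ dist (x i) (x j) ∈ Set.Icc (1 - ε) (1 + ε))).card < 6) with hBad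
  have hrow : ∀ i : Fin N,
      (-6 : ℝ) + (if i ∈ Bad then Δ else 0) ≤ ∑ j : Fin N, w i j := by
    intro i
    set Ti : Finset (Fin N) :=
      Finset.univ.filter (fun j : Fin N => i ≠ j ∧ dist (x i) (x j) ≤ β) with hTi
    have hsum0 : ∑ j : Fin N, w i j = ∑ j ∈ Ti, w i j := by
      refine (Finset.sum_subset Ti.subset_univ ?_).symm
      intro j _ hj
      rw [hTi, Finset.mem_filter] at hj
      push_neg at hj
      simp only [hw]
      rw [if_neg]
      exact fun h => absurd h (by intro h'; exact absurd (hj (Finset.mem_univ j)) (by simp [h']))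
    have hsplit := Finset.sum_filter_add_sum_filter_not Ti
      (fun j => dist (x i) (x j) ∈ Set.Icc (1 - ε) (1 + ε)) (w i)
    set K := Ti.filter (fun j => dist (x i) (x j) ∈ Set.Icc (1 - ε) (1 + ε)) with hK
    set L := Ti.filter (fun j => ¬ dist (x i) (x j) ∈ Set.Icc (1 - ε) (1 + ε)) with hL
    have hKval : ∑ j ∈ K, w i j = -(K.card : ℝ) := by
      have hc : ∀ j ∈ K, w i j = -1 := by
        intro j hj
        rw [hK, Finset.mem_filter] at hj
        obtain ⟨hjT, hjP⟩ := hj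
        rw [hTi, Finset.mem_filter] at hjT
        simp only [hw]
        rw [if_pos hjT.2, if_pos hjP]
      rw [Finset.sum_congr rfl hc, Finset.sum_const, nsmul_eq_mul, mul_neg_one]
    have hLval : ∑ j ∈ L, w i j = (L.card : ℝ) * (Δ - 1) := by
      have hc : ∀ j ∈ L, w i j = Δ - 1 := by
        intro j hj
        rw [hL, Finset.mem_filter] at hj
        obtain ⟨hjT, hjP⟩ := hj
        rw [hTi, Finset.mem_filter] at hjT
        simp only [hw]
        rw [if_pos hjT.2, if_neg hjP]
      rw [Finset.sum_congr rfl hc, Finset.sum_const, nsmul_eq_mul]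
    have hcardKL : K.card + L.card = Ti.card :=
      Finset.card_filter_add_card_filter_not _
    have hm6 : Ti.card ≤ 6 := by
      have himg : (Ti.image x).card = Ti.card := Finset.card_image_of_injective _ hinj
      rw [← himg]
      refine h3 (x i) (Ti.image x) ?_ ?_ ?_
      · intro y hy
        obtain ⟨j, hj, rfl⟩ := Finset.mem_image.mp hy
        rw [hTi, Finset.mem_filter] at hj
        rw [dist_comm]
        exact hj.2.2
      · intro y hy
        obtain ⟨j, hj, rfl⟩ := Finset.mem_image.mp hy
        rw [hTi, Finset.mem_filter] at hj
        rw [dist_comm]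
        exact hαle i j hj.2.1
      · intro y hy z hz hyz
        obtain ⟨j, hj, rfl⟩ := Finset.mem_image.mp hy
        obtain ⟨j', hj', rfl⟩ := Finset.mem_image.mp hz
        exact hαle j j' (fun h => hyz (by rw [h]))
    rw [hsum0, ← hsplit, hKval, hLval]
    have hKL6 : (K.card : ℝ) + (L.card : ℝ) ≤ 6 := by
      have := hcardKL.le.trans hm6
      exact_mod_cast this
    have hLnn : (0:ℝ) ≤ (L.card : ℝ) := Nat.cast_nonneg _
    have hKnn : (0:ℝ) ≤ (K.card : ℝ) := Nat.cast_nonneg _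
    by_cases hiB : i ∈ Bad
    · rw [if_pos hiB]
      have hK5 : (K.card : ℝ) ≤ 5 := by
        have hsub : K ⊆ Finset.univ.filter (fun j : Fin N =>
            j ≠ i ∧ dist (x i) (x j) ∈ Set.Icc (1 - ε) (1 + ε)) := by
          intro j hj
          rw [hK, Finset.mem_filter] at hj
          obtain ⟨hjT, hjP⟩ := hj
          rw [hTi, Finset.mem_filter] at hjT
          exact Finset.mem_filter.mpr ⟨Finset.mem_univ j, hjT.2.1.symm, hjP⟩
        have hlt : (Finset.univ.filter (fun j : Fin N =>
            j ≠ i ∧ dist (x i) (x j) ∈ Set.Icc (1 - ε) (1 + ε))).card < 6 := by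
          rw [hBad, Finset.mem_filter] at hiB
          exact hiB.2
        have := (Finset.card_le_card hsub).trans (Nat.lt_succ_iff.mp hlt)
        exact_mod_cast this
      nlinarith [mul_nonneg (by linarith : (0:ℝ) ≤ 6 - (K.card:ℝ) - (L.card:ℝ))
          (by linarith : (0:ℝ) ≤ 1 - Δ),
        mul_nonneg (by linarith : (0:ℝ) ≤ 5 - (K.card:ℝ)) hΔpos.le]
    · rw [if_neg hiB]
      nlinarith [mul_nonneg hLnn hΔpos.le]
  have hglobal : -6 * (N:ℝ) + Δ * (Bad.card : ℝ) ≤ ∑ i : Fin N, ∑ j : Fin N, w i j := by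
    calc -6 * (N:ℝ) + Δ * (Bad.card : ℝ)
        = ∑ i : Fin N, ((-6 : ℝ) + (if i ∈ Bad then Δ else 0)) := by
          rw [Finset.sum_add_distrib, Finset.sum_const, Finset.card_univ, Fintype.card_fin,
            nsmul_eq_mul, Finset.sum_ite_mem, Finset.univ_inter, Finset.sum_const, nsmul_eq_mul]
          ring
      _ ≤ _ := Finset.sum_le_sum fun i _ => hrow i
  have hlow : (((-6 * (N:ℝ) + Δ * (Bad.card : ℝ)) : ℝ) : EReal) ≤ energy V x := by
    refine le_trans (EReal.coe_le_coe_iff.mpr hglobal) ?_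
    rw [ereal_coe_sum]
    unfold energy
    refine Finset.sum_le_sum fun i _ => ?_
    rw [ereal_coe_sum]
    exact Finset.sum_le_sum fun j _ => hpoint i j
  have hfin : -6 * (N:ℝ) + Δ * (Bad.card : ℝ) ≤ -6 * (N:ℝ) + C * Real.sqrt N :=
    EReal.coe_le_coe_iff.mp (hlow.trans hE)
  rw [div_mul_eq_mul_div, le_div_iff₀ hΔpos]
  nlinarith [hfin]
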